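/- Let T be a finite tree on at least 2 vertices and let s be a nonzero real number. Then λ_max(M_T(s)) > 1. -/

import Mathlib

open scoped Classical
open Matrix Polynomial

/-- The deformed Laplacian matrix `M_G(s) = I - s·A(G) + s²·(D(G) - I)` of a finite
simple graph `G`. -/
noncomputable def deformedLap {V : Type*} [Fintype V] (G : SimpleGraph V) (s : ℝ) :
    Matrix V V ℝ :=
  1 - s • G.adjMatrix ℝ + s ^ 2 • (Matrix.diagonal (fun v => (G.degree v : ℝ)) - 1)

/-- The largest (real) eigenvalue of a matrix: the supremum of its real spectrum.
For a real symmetric matrix this is the maximal eigenvalue (the paper's `ρ`). -/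
noncomputable def lamMax {n : Type*} [Fintype n] (M : Matrix n n ℝ) : ℝ :=
  sSup (spectrum ℝ M)

/-- For a tree `T` on at least two vertices and nonzero `s`, `λ_max(M_T(s)) > 1`. -/
theorem stmt_8 {V : Type*} [Fintype V] (T : SimpleGraph V) (hT : T.IsTree)
    (hn : 2 ≤ Fintype.card V) (s : ℝ) (hs : s ≠ 0) :
    1 < lamMax (deformedLap T s) := by
  classical
  set M := deformedLap T s with hMdef
  -- M is Hermitian (real symmetric)
  have hM : M.IsHermitian := by
    unfold Matrix.IsHermitian
    ext i j
    simp [hMdef, deformedLap, conjTranspose_apply, Matrix.add_apply, Matrix.sub_apply,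
      Matrix.smul_apply, Matrix.one_apply, Matrix.diagonal_apply, SimpleGraph.adjMatrix_apply,
      T.adj_comm i j, eq_comm]
    left; split <;> first | rfl | (rename_i h; rw [h])
  -- find an edge
  obtain ⟨u, w, huw⟩ : ∃ u w, T.Adj u w := by
    obtain ⟨a, b, hab⟩ := Fintype.exists_pair_of_one_lt_card (by omega : 1 < Fintype.card V)
    obtain ⟨p⟩ := hT.isConnected.preconnected a b
    cases p with
    | nil => exact absurd rfl hab
    | cons h q => exact ⟨_, _, h⟩
  have hne : u ≠ w := huw.ne
  set t : ℝ := if 0 < s then -1 else 1 with ht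
  have hst : s * t = -|s| := by
    rcases lt_or_gt_of_ne hs with h | h
    · rw [ht, if_neg (not_lt.mpr h.le), abs_of_neg h]; ring
    · rw [ht, if_pos h, abs_of_pos h]; ring
  have ht2 : t ^ 2 = 1 := by rw [ht]; split <;> norm_num
  set x : V → ℝ := Pi.single u 1 + Pi.single w t with hx
  have key : x ⬝ᵥ ((1 : Matrix V V ℝ) - M) *ᵥ x
      = -(s ^ 2 * ((T.degree u : ℝ) - 1)) - s ^ 2 * ((T.degree w : ℝ) - 1) * t ^ 2
        + 2 * (s * t) := by
    simp [hx, mulVec_add, dotProduct_add, add_dotProduct, Matrix.mulVec_single,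
      single_dotProduct, hMdef, deformedLap, Matrix.add_apply, Matrix.sub_apply,
      Matrix.smul_apply, Matrix.one_apply, Matrix.diagonal_apply, SimpleGraph.adjMatrix_apply,
      hne, hne.symm, huw, huw.symm, T.loopless.irrefl u, T.loopless.irrefl w]
    ring
  have hdu : (1 : ℝ) ≤ (T.degree u : ℝ) := by
    exact_mod_cast (T.degree_pos_iff_exists_adj u).mpr ⟨w, huw⟩
  have hdw : (1 : ℝ) ≤ (T.degree w : ℝ) := by
    exact_mod_cast (T.degree_pos_iff_exists_adj w).mpr ⟨u, huw.symm⟩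
  have habs : 0 < |s| := abs_pos.mpr hs
  have hkey : x ⬝ᵥ ((1 : Matrix V V ℝ) - M) *ᵥ x < 0 := by
    rw [key, hst, ht2]
    have h1 : 0 ≤ s ^ 2 * ((T.degree u : ℝ) - 1) :=
      mul_nonneg (sq_nonneg s) (by linarith)
    have h2 : 0 ≤ s ^ 2 * ((T.degree w : ℝ) - 1) :=
      mul_nonneg (sq_nonneg s) (by linarith)
    nlinarith
  have hPSD : ¬ ((1 : Matrix V V ℝ) - M).PosSemidef := by
    intro h
    have h2 := h.dotProduct_mulVec_nonneg x
    rw [show star x = x from star_trivial x] at h2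
    linarith
  have h1M : ((1 : Matrix V V ℝ) - M).IsHermitian := Matrix.isHermitian_one.sub hM
  obtain ⟨i, hi⟩ : ∃ i, h1M.eigenvalues i < 0 := by
    by_contra hc
    push_neg at hc
    exact hPSD (h1M.posSemidef_iff_eigenvalues_nonneg.mpr hc)
  have hmem : h1M.eigenvalues i ∈ spectrum ℝ ((1 : Matrix V V ℝ) - M) :=
    h1M.eigenvalues_mem_spectrum_real i
  have hmem' : h1M.eigenvalues i ∈ spectrum ℝ ((algebraMap ℝ (Matrix V V ℝ)) 1 - M) := by
    rw [_root_.map_one]; exact hmem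
  rw [← spectrum.singleton_sub_eq] at hmem'
  obtain ⟨a, ha, b, hb, hab⟩ := Set.mem_sub.mp hmem'
  rw [Set.mem_singleton_iff] at ha
  subst ha
  have h1b : 1 < b := by linarith [hab ▸ hi]
  have hbdd : BddAbove (spectrum ℝ M) := (Matrix.finite_real_spectrum (A := M)).bddAbove
  exact lt_of_lt_of_le h1b (le_csSup hbdd hb)
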